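/- Let d ≥ 1 and r ≥ 1 be integers, q_1, …, q_d ∈ {1, …, r}, and let s_1, …, s_{r−1} > 0, C_g > 0, λ_0 > 0. For each j ∈ {1, …, r−1} let p_j : ℝ^d × ℝ^d → [0, ∞) be a measurable function satisfying the Gaussian bound p_j(u, v) ≤ C_g · s_j^{−d/2} · e^{−λ_0 |v − u|² / s_j} for all u, v ∈ ℝ^d, where |·| is the Euclidean norm. Let K : ℝ → ℝ be integrable, h_1, …, h_d > 0 and x ∈ ℝ^d. Then ∫_{(ℝ^d)^r} ∏_{i=1}^d |K_{h_i}(x_i − u^{q_i}_i)| · ∏_{j=1}^{r−1} p_j(u^j, u^{j+1}) du^1 … du^r ≤ C_g^{r−1} · (π/λ_0)^{d(r−1)/2} · (∫_ℝ |K(u)| du)^d. -/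

import Mathlib

open MeasureTheory Finset

/-- Rescaled kernel: `K_h(u) = (1/h) K(u/h)`. -/
noncomputable def kh (K : ℝ → ℝ) (h : ℝ) (u : ℝ) : ℝ := (1 / h) * K (u / h)

open scoped Matrix

/-- The coordinate-swap measurable equivalence. -/
def swapME (n : ℕ) (I : Type*) : (Fin n → I → ℝ) ≃ᵐ (I → Fin n → ℝ) where
  toEquiv := ⟨fun u i k => u k i, fun v k i => v i k, fun _ => rfl, fun _ => rfl⟩
  measurable_toFun := by
    refine measurable_pi_lambda _ (fun i => measurable_pi_lambda _ (fun k => ?_))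
    exact (measurable_pi_apply i).comp (measurable_pi_apply k)
  measurable_invFun := by
    refine measurable_pi_lambda _ (fun k => measurable_pi_lambda _ (fun i => ?_))
    exact (measurable_pi_apply k).comp (measurable_pi_apply i)


theorem swapME_coe (n : ℕ) (I : Type*) :
    ⇑(swapME n I) = fun (u : Fin n → I → ℝ) (i : I) (k : Fin n) => u k i := rfl

theorem measurePreserving_swap (I : Type*) [Fintype I] (m : ℕ) :
    MeasurePreserving
      (fun (u : Fin (m+1) → I → ℝ) (i : I) (k : Fin (m+1)) => u k i) volume volume := by
  induction m with
  | zero =>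
    have h1 : MeasurePreserving (fun (u : Fin 1 → I → ℝ) => u 0) volume volume := by
      exact volume_preserving_funUnique (Fin 1) (I → ℝ)
    have hconst : MeasurePreserving (fun (a : ℝ) (_ : Fin 1) => a) volume volume := by
      exact (volume_preserving_funUnique (Fin 1) ℝ).symm _
    have h2 : MeasurePreserving (fun (r : I → ℝ) (i : I) (_ : Fin 1) => r i) volume volume :=
      volume_preserving_pi (fun _ : I => hconst)
    have hfun : (fun (u : Fin 1 → I → ℝ) (i : I) (k : Fin 1) => u k i)
        = (fun (r : I → ℝ) (i : I) (_ : Fin 1) => r i) ∘ (fun u => u 0) := by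
      funext u i k
      rw [show k = 0 from Subsingleton.elim k 0]
      rfl
    rw [hfun]
    exact h2.comp h1
  | succ m IH =>
    have e1 : MeasurePreserving
        (MeasurableEquiv.piFinSuccAbove (fun _ : Fin (m+2) => I → ℝ) 0) volume volume :=
      volume_preserving_piFinSuccAbove _ 0
    have e2 : MeasurePreserving
        (Prod.map (id : (I → ℝ) → (I → ℝ))
          (fun (u : Fin (m+1) → I → ℝ) (i : I) (k : Fin (m+1)) => u k i)) volume volume := by
      exact (MeasurePreserving.id (volume : Measure (I → ℝ))).prod IH
    have e3 : MeasurePreserving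
        (MeasurableEquiv.arrowProdEquivProdArrow ℝ (Fin (m+1) → ℝ) I).symm volume volume :=
      (volume_measurePreserving_arrowProdEquivProdArrow ℝ (Fin (m+1) → ℝ) I).symm _
    have e4 : MeasurePreserving
        (fun (w : I → ℝ × (Fin (m+1) → ℝ)) (i : I) =>
          (MeasurableEquiv.piFinSuccAbove (fun _ : Fin (m+2) => ℝ) 0).symm (w i))
        volume volume :=
      volume_preserving_pi (fun _ =>
        (volume_preserving_piFinSuccAbove (fun _ : Fin (m+2) => ℝ) 0).symm _)
    have hcomp := ((e4.comp e3).comp e2).comp e1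
    have hfun : (fun (u : Fin (m+2) → I → ℝ) (i : I) (k : Fin (m+2)) => u k i)
        = (fun (w : I → ℝ × (Fin (m+1) → ℝ)) (i : I) =>
            (MeasurableEquiv.piFinSuccAbove (fun _ : Fin (m+2) => ℝ) 0).symm (w i))
          ∘ ((MeasurableEquiv.arrowProdEquivProdArrow ℝ (Fin (m+1) → ℝ) I).symm
          ∘ (Prod.map (id : (I → ℝ) → (I → ℝ))
              (fun (u : Fin (m+1) → I → ℝ) (i : I) (k : Fin (m+1)) => u k i)
          ∘ (MeasurableEquiv.piFinSuccAbove (fun _ : Fin (m+2) => I → ℝ) 0))) := by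
      funext u i k
      simp only [Function.comp_apply, MeasurableEquiv.piFinSuccAbove,
        MeasurableEquiv.arrowProdEquivProdArrow, Equiv.arrowProdEquivProdArrow,
        MeasurableEquiv.symm_mk, MeasurableEquiv.coe_mk, Equiv.coe_fn_mk, Equiv.coe_fn_symm_mk,
        Equiv.symm_symm, Fin.insertNthEquiv, Prod.map]
      induction k using Fin.cases with
      | zero => simp [Fin.insertNth_zero]
      | succ j => simp [Fin.insertNth_zero, Fin.zero_succAbove, Fin.tail]
    rw [hfun]
    exact hcomp

theorem chain_integral (m : ℕ) (q : Fin (m+1)) (f : ℝ → ℝ) (g : Fin m → ℝ → ℝ)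
    (hf : Integrable f) (hg : ∀ j, Integrable (g j)) :
    Integrable (fun t : Fin (m+1) → ℝ => f (t q) * ∏ j, g j (t j.succ - t j.castSucc)) ∧
    (∫ t : Fin (m+1) → ℝ, f (t q) * ∏ j, g j (t j.succ - t j.castSucc))
      = (∫ a, f a) * ∏ j, ∫ a, g j a := by
  classical
  set v : Fin (m+1) → ℝ := Pi.single q 1 - Pi.single 0 1 with hv
  set A : Matrix (Fin (m+1)) (Fin (m+1)) ℝ := 1 + (Matrix.replicateCol Unit 1 : Matrix (Fin (m+1)) Unit ℝ) * Matrix.replicateRow Unit v with hA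
  set S : Matrix (Fin (m+1)) (Fin (m+1)) ℝ :=
    Matrix.of (fun k j : Fin (m+1) => if (k:ℕ) = (j:ℕ) + 1 then (1:ℝ) else 0) with hS
  set B : Matrix (Fin (m+1)) (Fin (m+1)) ℝ := 1 - S with hB
  set N := B * A with hN
  have hdetA : A.det = 1 := by
    rw [hA, Matrix.det_one_add_replicateCol_mul_replicateRow]
    simp [hv, dotProduct, Pi.single_apply, sub_mul, Finset.sum_sub_distrib]
  have hdetB : B.det = 1 := by
    have htri : B.BlockTriangular OrderDual.toDual := by
      intro i j hij
      have h1 : (i:ℕ) < (j:ℕ) := hij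
      rw [hB]
      simp only [Matrix.sub_apply, Matrix.one_apply, Matrix.of_apply, hS]
      rw [if_neg (by intro hc; subst hc; omega : ¬ i = j), if_neg (by omega : ¬ (i:ℕ) = (j:ℕ) + 1)]
      ring
    rw [Matrix.det_of_lowerTriangular B htri]
    have : ∀ k : Fin (m+1), B k k = 1 := by
      intro k
      rw [hB]
      simp only [Matrix.sub_apply, Matrix.one_apply_eq, Matrix.of_apply, hS]
      rw [if_neg (by omega : ¬ (k:ℕ) = (k:ℕ) + 1)]
      ring
    simp [this]
  have hAmul : ∀ (t : Fin (m+1) → ℝ) (k : Fin (m+1)), (A *ᵥ t) k = t k + (t q - t 0) := by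
    intro t k
    rw [hA, Matrix.add_mulVec, Matrix.one_mulVec, Pi.add_apply]
    congr 1
    simp [Matrix.mulVec, dotProduct, Matrix.mul_apply, Matrix.replicateCol, Matrix.replicateRow, hv,
      Pi.single_apply, sub_mul, ite_mul, one_mul, zero_mul, Finset.sum_sub_distrib,
      Finset.sum_ite_eq]
  have hSmul0 : ∀ y : Fin (m+1) → ℝ, (S *ᵥ y) 0 = 0 := by
    intro y
    rw [hS]
    simp only [Matrix.mulVec, dotProduct, Matrix.of_apply, ite_mul, one_mul, zero_mul]
    refine Finset.sum_eq_zero (fun j _ => ?_)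
    rw [if_neg]
    intro hc
    simp only [Fin.val_zero] at hc
    omega
  have hSmuls : ∀ (y : Fin (m+1) → ℝ) (j : Fin m), (S *ᵥ y) j.succ = y j.castSucc := by
    intro y j
    rw [hS]
    simp only [Matrix.mulVec, dotProduct, Matrix.of_apply, ite_mul, one_mul, zero_mul]
    rw [Finset.sum_eq_single j.castSucc]
    · rw [if_pos (by simp)]
    · intro a _ ha
      rw [if_neg]
      intro hc
      apply ha
      apply Fin.ext
      simp only [Fin.val_succ, Fin.coe_castSucc] at hc ⊢
      omega
    · intro habs; exact absurd (Finset.mem_univ _) habs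
  have hNmul : ∀ t : Fin (m+1) → ℝ, N *ᵥ t = (A *ᵥ t) - S *ᵥ (A *ᵥ t) := by
    intro t
    rw [hN, ← Matrix.mulVec_mulVec, hB, Matrix.sub_mulVec, Matrix.one_mulVec]
  have hN0 : ∀ t : Fin (m+1) → ℝ, (N *ᵥ t) 0 = t q := by
    intro t
    rw [hNmul, Pi.sub_apply, hSmul0, hAmul]
    ring
  have hNs : ∀ (t : Fin (m+1) → ℝ) (j : Fin m), (N *ᵥ t) j.succ = t j.succ - t j.castSucc := by
    intro t j
    rw [hNmul, Pi.sub_apply, hSmuls, hAmul, hAmul]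
    ring
  have hdetN : N.det = 1 := by rw [hN, Matrix.det_mul, hdetA, hdetB, mul_one]
  set ψ := Matrix.toLin' N with hψ
  have hdetψ1 : LinearMap.det ψ = 1 := by rw [hψ, LinearMap.det_toLin', hdetN]
  have hdetψ : LinearMap.det ψ ≠ 0 := by rw [hdetψ1]; exact one_ne_zero
  set E := (ψ.equivOfDetNeZero hdetψ).toContinuousLinearEquiv.toHomeomorph.toMeasurableEquiv
    with hE
  have hEcoe : ∀ t, E t = N *ᵥ t := fun t => Matrix.toLin'_apply N t
  have hmp : MeasurePreserving E volume volume := by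
    refine ⟨E.measurable, ?_⟩
    have hcoe : ⇑E = ⇑ψ := rfl
    rw [hcoe, Real.map_linearMap_volume_pi_eq_smul_volume_pi hdetψ, hdetψ1]
    simp
  set φ : Fin (m+1) → ℝ → ℝ := Fin.cons f g with hφ
  have hφint : ∀ k, Integrable (φ k) := by
    intro k
    induction k using Fin.cases with
    | zero => simpa [hφ] using hf
    | succ j => simpa [hφ] using hg j
  have hkey : (fun t : Fin (m+1) → ℝ => f (t q) * ∏ j, g j (t j.succ - t j.castSucc))
      = (fun w : Fin (m+1) → ℝ => ∏ k, φ k (w k)) ∘ ⇑E := by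
    funext t
    simp only [Function.comp_apply]
    rw [Fin.prod_univ_succ]
    simp only [hφ, Fin.cons_zero, Fin.cons_succ, hEcoe t, hN0 t]
    congr 1
    refine Finset.prod_congr rfl (fun j _ => ?_)
    rw [hNs t j]
  have hint : Integrable (fun w : Fin (m+1) → ℝ => ∏ k, φ k (w k)) :=
    Integrable.fintype_prod hφint
  constructor
  · rw [hkey]
    exact (hmp.integrable_comp_emb E.measurableEmbedding).2 hint
  · rw [hkey]
    have h1 : ∫ t : Fin (m+1) → ℝ,
        ((fun w : Fin (m+1) → ℝ => ∏ k, φ k (w k)) ∘ ⇑E) t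
        = ∫ w : Fin (m+1) → ℝ, ∏ k, φ k (w k) := by
      simp only [Function.comp_apply]
      exact hmp.integral_comp' (fun w => ∏ k, φ k (w k))
    rw [h1, MeasureTheory.integral_fintype_prod_volume_eq_prod (f := φ), Fin.prod_univ_succ]
    simp [hφ]

theorem kh_abs_integral (K : ℝ → ℝ) (hK : Integrable K) {h : ℝ} (hh : 0 < h) (x : ℝ) :
    Integrable (fun a : ℝ => |(1 / h) * K ((x - a) / h)|) ∧
    (∫ a : ℝ, |(1 / h) * K ((x - a) / h)|) = ∫ a : ℝ, |K a| := by
  have hrw : (fun a : ℝ => |(1 / h) * K ((x - a) / h)|)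
      = fun a : ℝ => (1 / h) * |K ((x - a) / h)| := by
    funext a
    rw [abs_mul, abs_of_pos (by positivity : (0:ℝ) < 1 / h)]
  constructor
  · rw [hrw]
    exact ((hK.abs.comp_div hh.ne').comp_sub_left x).const_mul _
  · rw [hrw, integral_const_mul,
      integral_sub_left_eq_self (fun a : ℝ => |K (a / h)|) volume x,
      MeasureTheory.Measure.integral_comp_div (fun a : ℝ => |K a|) h,
      abs_of_pos hh, smul_eq_mul]
    field_simp

theorem gauss_integral {lam0 s : ℝ} (hlam0 : 0 < lam0) (hs : 0 < s) :
    Integrable (fun a : ℝ => s ^ (-(1:ℝ)/2) * Real.exp (-lam0 * a ^ 2 / s)) ∧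
    (∫ a : ℝ, s ^ (-(1:ℝ)/2) * Real.exp (-lam0 * a ^ 2 / s))
      = Real.sqrt (Real.pi / lam0) := by
  have hb : 0 < lam0 / s := div_pos hlam0 hs
  have hrw : (fun a : ℝ => s ^ (-(1:ℝ)/2) * Real.exp (-lam0 * a ^ 2 / s))
      = fun a : ℝ => s ^ (-(1:ℝ)/2) * Real.exp (-(lam0 / s) * a ^ 2) := by
    funext a
    congr 2
    ring
  constructor
  · rw [hrw]
    exact (integrable_exp_neg_mul_sq hb).const_mul _
  · rw [hrw, integral_const_mul, integral_gaussian,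
      show Real.pi / (lam0 / s) = s * (Real.pi / lam0) by field_simp,
      Real.sqrt_mul hs.le,
      show -(1:ℝ)/2 = -(1/2) by ring,
      Real.rpow_neg hs.le, ← Real.sqrt_eq_rpow, ← mul_assoc,
      inv_mul_cancel₀ (Real.sqrt_ne_zero'.mpr hs), one_mul]

/-- Per-coordinate chain integral: kernel factor anchored at `qi`, Gaussian links. -/
theorem Fi_lemma (m : ℕ) (qi : Fin (m+1)) (K : ℝ → ℝ) (hK : Integrable K)
    {hi : ℝ} (hhi : 0 < hi) (xi : ℝ) {lam0 : ℝ} (hlam0 : 0 < lam0)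
    {s : Fin m → ℝ} (hs : ∀ j, 0 < s j) :
    Integrable (fun t : Fin (m+1) → ℝ => |kh K hi (xi - t qi)|
        * ∏ j, s j ^ (-(1:ℝ)/2) * Real.exp (-lam0 * (t j.succ - t j.castSucc) ^ 2 / s j)) ∧
    (∫ t : Fin (m+1) → ℝ, |kh K hi (xi - t qi)|
        * ∏ j, s j ^ (-(1:ℝ)/2) * Real.exp (-lam0 * (t j.succ - t j.castSucc) ^ 2 / s j))
      = (∫ a : ℝ, |K a|) * Real.sqrt (Real.pi / lam0) ^ m := by
  have hfint : Integrable (fun a : ℝ => |kh K hi (xi - a)|) := by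
    simpa only [kh] using (kh_abs_integral K hK hhi xi).1
  obtain ⟨h1, h2⟩ := chain_integral m qi (fun a => |kh K hi (xi - a)|)
    (fun j a => s j ^ (-(1:ℝ)/2) * Real.exp (-lam0 * a ^ 2 / s j)) hfint
    (fun j => (gauss_integral hlam0 (hs j)).1)
  constructor
  · exact h1
  · refine Eq.trans h2 ?_
    have hkv : (∫ a : ℝ, |kh K hi (xi - a)|) = ∫ a : ℝ, |K a| := by
      simpa only [kh] using (kh_abs_integral K hK hhi xi).2
    rw [hkv, Finset.prod_congr rfl (fun j _ => (gauss_integral hlam0 (hs j)).2),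
      Finset.prod_const, Finset.card_univ, Fintype.card_fin]


/-- Chains of kernels bounded by Gaussian kernels integrate to a constant independent of
the bandwidths and of the time increments: with `r = m + 1` points `u^1, …, u^r ∈ ℝ^d`,
kernels `p_j(u, v) ≤ C_g s_j^{−d/2} e^{−λ₀|v−u|²/s_j}`, one has
`∫ ∏_i |K_{h_i}(x_i − u^{q_i}_i)| ∏_j p_j(u^j, u^{j+1}) du ≤ C_g^{r−1} (π/λ₀)^{d(r−1)/2} (∫|K|)^d`. -/
theorem kernel_gaussian_chain_integral_bound (d m : ℕ) (hd : 1 ≤ d)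
    (q : Fin d → Fin (m + 1))
    (s : Fin m → ℝ) (hs : ∀ j, 0 < s j)
    (Cg lam0 : ℝ) (hCg : 0 < Cg) (hlam0 : 0 < lam0)
    (p : Fin m → (Fin d → ℝ) → (Fin d → ℝ) → ℝ)
    (hp0 : ∀ j u v, 0 ≤ p j u v)
    (hpm : ∀ j, Measurable (fun uv : (Fin d → ℝ) × (Fin d → ℝ) => p j uv.1 uv.2))
    (hpg : ∀ j u v, p j u v
      ≤ Cg * s j ^ (-(d : ℝ) / 2)
          * Real.exp (-lam0 * (∑ i, (v i - u i) ^ 2) / s j))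
    (K : ℝ → ℝ) (hK : Integrable K)
    (h : Fin d → ℝ) (hh : ∀ i, 0 < h i) (x : Fin d → ℝ) :
    (∫ u : Fin (m + 1) → (Fin d → ℝ),
        (∏ i, |kh K (h i) (x i - u (q i) i)|)
          * ∏ j : Fin m, p j (u j.castSucc) (u j.succ))
      ≤ Cg ^ m * (Real.pi / lam0) ^ (((d : ℝ) * (m : ℝ)) / 2) * (∫ u, |K u|) ^ d := by
  classical
  -- per-coordinate chain functions
  set F : Fin d → (Fin (m+1) → ℝ) → ℝ := fun i t =>
    |kh K (h i) (x i - t (q i))|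
      * ∏ j, s j ^ (-(1:ℝ)/2) * Real.exp (-lam0 * (t j.succ - t j.castSucc) ^ 2 / s j)
    with hFdef
  have hchainI : ∀ i, Integrable (F i) := fun i =>
    (Fi_lemma m (q i) K hK (hh i) (x i) hlam0 hs).1
  have hchainV : ∀ i, (∫ t, F i t)
      = (∫ a : ℝ, |K a|) * Real.sqrt (Real.pi / lam0) ^ m := fun i =>
    (Fi_lemma m (q i) K hK (hh i) (x i) hlam0 hs).2
  have hswapMP : MeasurePreserving (swapME (m+1) (Fin d)) volume volume := by
    rw [swapME_coe]
    exact measurePreserving_swap (Fin d) m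
  have hprodI : Integrable (fun w : Fin d → (Fin (m+1) → ℝ) => ∏ i, F i (w i)) :=
    Integrable.fintype_prod (fun i => hchainI i)
  have hMint : Integrable (fun u : Fin (m+1) → (Fin d → ℝ) =>
      Cg ^ m * ∏ i, F i (fun k => u k i)) := by
    have h2 := (hswapMP.integrable_comp_emb (swapME (m+1) (Fin d)).measurableEmbedding).2 hprodI
    rw [swapME_coe] at h2
    exact h2.const_mul _
  have hMval : (∫ u : Fin (m+1) → (Fin d → ℝ), Cg ^ m * ∏ i, F i (fun k => u k i))
      = Cg ^ m * ((∫ a : ℝ, |K a|) * Real.sqrt (Real.pi / lam0) ^ m) ^ d := by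
    rw [integral_const_mul]
    congr 1
    have h1 := hswapMP.integral_comp' (fun w : Fin d → (Fin (m+1) → ℝ) => ∏ i, F i (w i))
    rw [swapME_coe] at h1
    rw [h1, MeasureTheory.integral_fintype_prod_volume_eq_prod (f := F)]
    rw [Finset.prod_congr rfl (fun i _ => hchainV i), Finset.prod_const, Finset.card_univ,
      Fintype.card_fin]
  -- pointwise bound
  have hpt : ∀ u : Fin (m+1) → (Fin d → ℝ),
      (∏ i, |kh K (h i) (x i - u (q i) i)|) * ∏ j : Fin m, p j (u j.castSucc) (u j.succ)
        ≤ Cg ^ m * ∏ i, F i (fun k => u k i) := by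
    intro u
    have hKnn : 0 ≤ ∏ i, |kh K (h i) (x i - u (q i) i)| :=
      Finset.prod_nonneg (fun i _ => abs_nonneg _)
    have h1 : ∏ j : Fin m, p j (u j.castSucc) (u j.succ)
        ≤ ∏ j : Fin m, Cg * s j ^ (-(d:ℝ)/2)
            * Real.exp (-lam0 * (∑ i, (u j.succ i - u j.castSucc i) ^ 2) / s j) :=
      Finset.prod_le_prod (fun j _ => hp0 j _ _) (fun j _ => hpg j _ _)
    have hsplit : ∀ j : Fin m, s j ^ (-(d:ℝ)/2)
        * Real.exp (-lam0 * (∑ i, (u j.succ i - u j.castSucc i) ^ 2) / s j)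
        = ∏ i, s j ^ (-(1:ℝ)/2)
            * Real.exp (-lam0 * (u j.succ i - u j.castSucc i) ^ 2 / s j) := by
      intro j
      have hexp : Real.exp (-lam0 * (∑ i, (u j.succ i - u j.castSucc i) ^ 2) / s j)
          = ∏ i, Real.exp (-lam0 * (u j.succ i - u j.castSucc i) ^ 2 / s j) := by
        rw [← Real.exp_sum]
        congr 1
        rw [← Finset.sum_div, ← Finset.mul_sum]
      have hpow : (s j) ^ (-(d:ℝ)/2) = ∏ _i : Fin d, (s j) ^ (-(1:ℝ)/2) := by
        rw [Finset.prod_const, Finset.card_univ, Fintype.card_fin,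
          ← Real.rpow_natCast ((s j) ^ (-(1:ℝ)/2)) d, ← Real.rpow_mul (hs j).le]
        congr 1
        ring
      rw [hexp, hpow, ← Finset.prod_mul_distrib]
    have e1 : ∏ j : Fin m, (Cg * s j ^ (-(d:ℝ)/2)
          * Real.exp (-lam0 * (∑ i, (u j.succ i - u j.castSucc i) ^ 2) / s j))
        = Cg ^ m * ∏ i, ∏ j : Fin m, s j ^ (-(1:ℝ)/2)
            * Real.exp (-lam0 * (u j.succ i - u j.castSucc i) ^ 2 / s j) := by
      simp only [mul_assoc]
      rw [Finset.prod_mul_distrib, Finset.prod_const, Finset.card_univ, Fintype.card_fin]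
      congr 1
      rw [Finset.prod_congr rfl (fun j _ => hsplit j), Finset.prod_comm]
    have h2 : (∏ i, |kh K (h i) (x i - u (q i) i)|)
        * ∏ j : Fin m, (Cg * s j ^ (-(d:ℝ)/2)
            * Real.exp (-lam0 * (∑ i, (u j.succ i - u j.castSucc i) ^ 2) / s j))
        = Cg ^ m * ∏ i, F i (fun k => u k i) := by
      rw [e1, ← mul_assoc, mul_comm (∏ i, |kh K (h i) (x i - u (q i) i)|) (Cg ^ m),
        mul_assoc, ← Finset.prod_mul_distrib]
    calc (∏ i, |kh K (h i) (x i - u (q i) i)|) * ∏ j : Fin m, p j (u j.castSucc) (u j.succ)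
        ≤ (∏ i, |kh K (h i) (x i - u (q i) i)|)
          * ∏ j : Fin m, (Cg * s j ^ (-(d:ℝ)/2)
              * Real.exp (-lam0 * (∑ i, (u j.succ i - u j.castSucc i) ^ 2) / s j)) :=
        mul_le_mul_of_nonneg_left h1 hKnn
      _ = Cg ^ m * ∏ i, F i (fun k => u k i) := h2
  have hnn : ∀ u : Fin (m+1) → (Fin d → ℝ),
      0 ≤ (∏ i, |kh K (h i) (x i - u (q i) i)|)
          * ∏ j : Fin m, p j (u j.castSucc) (u j.succ) := fun u =>
    mul_nonneg (Finset.prod_nonneg (fun i _ => abs_nonneg _))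
      (Finset.prod_nonneg (fun j _ => hp0 j _ _))
  have hmono := integral_mono_of_nonneg (Filter.Eventually.of_forall hnn) hMint
    (Filter.Eventually.of_forall hpt)
  refine hmono.trans ?_
  rw [hMval]
  have hc : Real.sqrt (Real.pi / lam0) ^ (m * d)
      = (Real.pi / lam0) ^ (((d:ℝ) * (m:ℝ)) / 2) := by
    have hnn' : (0:ℝ) ≤ Real.pi / lam0 := div_nonneg Real.pi_pos.le hlam0.le
    rw [Real.sqrt_eq_rpow, ← Real.rpow_natCast ((Real.pi / lam0) ^ ((1:ℝ)/2)) (m*d),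
      ← Real.rpow_mul hnn']
    congr 1
    push_cast
    ring
  rw [mul_pow, ← pow_mul, hc]
  exact le_of_eq (by ring)
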